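/- The Virasoro module V_{0,1} has a unique nonzero proper submodule, namely V'_{0,1} = ⊕_{i ≠ 0} ℂ v_i. -/

import Mathlib

open Finsupp TensorProduct

noncomputable section

/-- The underlying space of the Virasoro algebra: coordinates on the basis
`{d_n : n ∈ ℤ}` together with the coefficient of the central element `C`. -/
abbrev VirCarrier : Type := (ℤ →₀ ℂ) × ℂ

/-- The basis element `d_n`. -/
def dGen (n : ℤ) : VirCarrier := (Finsupp.single n 1, 0)

/-- The central element `C`. -/
def cGen : VirCarrier := (0, 1)

/-- `[d_m, d_n] = (n-m) d_{m+n} + δ_{m,-n} ((m³-m)/12) C`. -/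
def dBracket (m n : ℤ) : VirCarrier :=
  (Finsupp.single (m + n) ((n : ℂ) - (m : ℂ)), if m = -n then ((m : ℂ) ^ 3 - (m : ℂ)) / 12 else 0)

/-- The bilinear extension of the bracket on basis elements; the central element `C`
brackets to zero with everything (`[d_n, C] = 0`). -/
def virBracket (x y : VirCarrier) : VirCarrier :=
  x.1.sum fun m a => y.1.sum fun n b => (a * b) • dBracket m n

/-- Action of `d_n` on `V_{α,β}`: `d_n · v_k = (α + k + nβ) v_{k+n}`, where `v_k` is the
basis element `Finsupp.single k 1`. -/
def dAct (α β : ℂ) (n : ℤ) : Module.End ℂ (ℤ →₀ ℂ) :=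
  Finsupp.lsum ℂ fun k => (α + (k : ℂ) + (n : ℂ) * β) • Finsupp.lsingle (k + n)

/-- The action of the Virasoro algebra on the intermediate series module `V_{α,β}`;
`C` acts by zero. -/
def vabAction (α β : ℂ) : VirCarrier →ₗ[ℂ] Module.End ℂ (ℤ →₀ ℂ) :=
  (Finsupp.lsum ℂ fun n =>
    LinearMap.toSpanSingleton ℂ (Module.End ℂ (ℤ →₀ ℂ)) (dAct α β n)).comp
    (LinearMap.fst ℂ (ℤ →₀ ℂ) ℂ)

/-- A subspace invariant under an action. -/
def ActInvariant {L V : Type*} [AddCommGroup V] [Module ℂ V]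
    (act : L → Module.End ℂ V) (U : Submodule ℂ V) : Prop :=
  ∀ x : L, ∀ v ∈ U, act x v ∈ U

/-- Irreducibility: the only invariant subspaces are `⊥` and `⊤`. -/
def ActIrreducible {L V : Type*} [AddCommGroup V] [Module ℂ V]
    (act : L → Module.End ℂ V) : Prop :=
  ∀ U : Submodule ℂ V, ActInvariant act U → U = ⊥ ∨ U = ⊤

/-- The set `S` generates the module: any invariant subspace containing `S` is everything. -/
def ActGenerates {L V : Type*} [AddCommGroup V] [Module ℂ V]
    (act : L → Module.End ℂ V) (S : Set V) : Prop :=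
  ∀ U : Submodule ℂ V, ActInvariant act U → S ⊆ U → U = ⊤

lemma dAct_single (n k : ℤ) (c : ℂ) :
    dAct 0 1 n (Finsupp.single k c) = ((k : ℂ) + n) • Finsupp.single (k + n) c := by
  rw [dAct, Finsupp.lsum_single]; simp

lemma dAct_apply (n : ℤ) (f : ℤ →₀ ℂ) (m : ℤ) :
    dAct 0 1 n f m = (m : ℂ) * f (m - n) := by
  classical
  induction f using Finsupp.induction_linear with
  | zero => simp
  | add f g hf hg => simp [hf, hg, mul_add]
  | single k c =>
    rw [dAct_single]
    simp only [Finsupp.smul_apply, Finsupp.single_apply]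
    by_cases h : k + n = m
    · have h2 : m - n = k := by omega
      simp only [if_pos h, if_pos h2.symm, smul_eq_mul]
      rw [← h]; push_cast; ring
    · have h2 : ¬ (k = m - n) := by omega
      simp [h, h2]

lemma vab_dGen (n : ℤ) : vabAction 0 1 (dGen n) = dAct 0 1 n := by
  have h : (dGen n).1 = Finsupp.single n 1 := rfl
  rw [vabAction, LinearMap.comp_apply, LinearMap.fst_apply, h, Finsupp.lsum_single,
    LinearMap.toSpanSingleton_apply, one_smul]

lemma vab_apply_zero (x : VirCarrier) (f : ℤ →₀ ℂ) :
    vabAction 0 1 x f 0 = 0 := by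
  rw [vabAction]
  simp only [LinearMap.comp_apply, LinearMap.fst_apply, Finsupp.lsum_apply]
  rw [Finsupp.sum]
  rw [LinearMap.coe_sum, Finset.sum_apply, Finsupp.finset_sum_apply]
  apply Finset.sum_eq_zero
  intro n _
  simp [LinearMap.toSpanSingleton, dAct_apply]

lemma extract_aux (U : Submodule ℂ (ℤ →₀ ℂ))
    (hU : ∀ f ∈ U, dAct 0 1 0 f ∈ U) :
    ∀ N : ℕ, ∀ f ∈ U, f.support.card ≤ N → ∀ k, Finsupp.single k (f k) ∈ U := by
  classical
  intro N
  induction N with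
  | zero =>
    intro f _ hcard k
    have : f = 0 := by
      rw [← Finsupp.support_eq_empty, ← Finset.card_eq_zero]
      omega
    simp [this]
  | succ N ih =>
    intro f hf hcard k
    by_cases h0 : f = 0
    · simp [h0]
    obtain ⟨j, hj⟩ := Finsupp.support_nonempty_iff.mpr h0
    set g : ℤ →₀ ℂ := dAct 0 1 0 f - (j : ℂ) • f with hgdef
    have hgU : g ∈ U := U.sub_mem (hU f hf) (U.smul_mem _ hf)
    have hgval : ∀ m : ℤ, g m = ((m : ℂ) - j) * f m := by
      intro m
      simp [hgdef, dAct_apply, sub_mul]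
    have hsupp : g.support ⊆ f.support.erase j := by
      intro m hm
      rw [Finsupp.mem_support_iff] at hm
      rw [Finset.mem_erase, Finsupp.mem_support_iff]
      constructor
      · rintro rfl; apply hm; rw [hgval]; ring
      · intro hfm; apply hm; rw [hgval, hfm, mul_zero]
    have hcard' : g.support.card ≤ N := by
      have h1 := Finset.card_le_card hsupp
      rw [Finset.card_erase_of_mem hj] at h1
      omega
    have key : ∀ m : ℤ, m ≠ j → Finsupp.single m (f m) ∈ U := by
      intro m hm
      have hmj : ((m : ℂ) - j) ≠ 0 := by
        rw [sub_ne_zero]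
        exact_mod_cast hm
      have heq : Finsupp.single m (f m) = ((m : ℂ) - j)⁻¹ • Finsupp.single m (g m) := by
        rw [hgval, Finsupp.smul_single, smul_eq_mul, inv_mul_cancel_left₀ hmj]
      rw [heq]
      exact U.smul_mem _ (ih g hgU hcard' m)
    by_cases hk : k = j
    · subst hk
      have hrest : (∑ m ∈ f.support.erase k, Finsupp.single m (f m)) ∈ U :=
        Submodule.sum_mem U fun m hm => key m (Finset.ne_of_mem_erase hm)
      have hsum : Finsupp.single k (f k) + ∑ m ∈ f.support.erase k, Finsupp.single m (f m) = f := by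
        rw [Finset.add_sum_erase f.support (fun m => Finsupp.single m (f m)) hj]
        exact Finsupp.sum_single f
      have heq : Finsupp.single k (f k) = f - ∑ m ∈ f.support.erase k, Finsupp.single m (f m) :=
        eq_sub_of_add_eq hsum
      rw [heq]
      exact U.sub_mem hf hrest
    · exact key k hk

lemma extract (U : Submodule ℂ (ℤ →₀ ℂ)) (hU : ∀ f ∈ U, dAct 0 1 0 f ∈ U)
    (f : ℤ →₀ ℂ) (hf : f ∈ U) (k : ℤ) : Finsupp.single k (f k) ∈ U :=
  extract_aux U hU f.support.card f hf le_rfl k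

lemma mem_span_iff (f : ℤ →₀ ℂ) :
    f ∈ Submodule.span ℂ {f : ℤ →₀ ℂ | ∃ i : ℤ, i ≠ 0 ∧ f = Finsupp.single i 1} ↔ f 0 = 0 := by
  classical
  constructor
  · intro hf
    induction hf using Submodule.span_induction with
    | mem x hx => obtain ⟨i, hi, rfl⟩ := hx; simp [Finsupp.single_apply, hi]
    | zero => simp
    | add x y _ _ hx hy => simp [hx, hy]
    | smul c x _ hx => simp [hx]
  · intro hf
    have : f = ∑ m ∈ f.support, Finsupp.single m (f m) := (Finsupp.sum_single f).symm
    rw [this]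
    apply Submodule.sum_mem
    intro m hm
    have hm0 : m ≠ 0 := by
      rintro rfl
      exact (Finsupp.mem_support_iff.mp hm) hf
    have : Finsupp.single m (f m) = (f m) • Finsupp.single m (1 : ℂ) := by
      rw [Finsupp.smul_single, smul_eq_mul, mul_one]
    rw [this]
    exact Submodule.smul_mem _ _ (Submodule.subset_span ⟨m, hm0, rfl⟩)

lemma single_one_mem (U : Submodule ℂ (ℤ →₀ ℂ)) {m : ℤ} {c : ℂ} (hc : c ≠ 0)
    (h : Finsupp.single m c ∈ U) : Finsupp.single m (1 : ℂ) ∈ U := by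
  have := U.smul_mem c⁻¹ h
  rwa [Finsupp.smul_single, smul_eq_mul, inv_mul_cancel₀ hc] at this

lemma eq_top_of_singles (U : Submodule ℂ (ℤ →₀ ℂ))
    (h : ∀ m : ℤ, Finsupp.single m (1 : ℂ) ∈ U) : U = ⊤ := by
  rw [eq_top_iff]
  intro f _
  rw [← Finsupp.sum_single f, Finsupp.sum]
  refine Submodule.sum_mem U fun m _ => ?_
  have heq : Finsupp.single m (f m) = (f m) • Finsupp.single m (1 : ℂ) := by
    rw [Finsupp.smul_single, smul_eq_mul, mul_one]
  rw [heq]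
  exact U.smul_mem _ (h m)

/-- `V_{0,1}` has a unique nonzero proper submodule, namely `V'_{0,1} = ⊕_{i ≠ 0} ℂ v_i`. -/
theorem v01_unique_submodule :
    ActInvariant (fun x => vabAction 0 1 x)
        (Submodule.span ℂ {f : ℤ →₀ ℂ | ∃ i : ℤ, i ≠ 0 ∧ f = Finsupp.single i 1}) ∧
    Submodule.span ℂ {f : ℤ →₀ ℂ | ∃ i : ℤ, i ≠ 0 ∧ f = Finsupp.single i 1} ≠ ⊥ ∧
    Submodule.span ℂ {f : ℤ →₀ ℂ | ∃ i : ℤ, i ≠ 0 ∧ f = Finsupp.single i 1} ≠ ⊤ ∧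
    (∀ U : Submodule ℂ (ℤ →₀ ℂ), ActInvariant (fun x => vabAction 0 1 x) U →
      U ≠ ⊥ → U ≠ ⊤ →
      U = Submodule.span ℂ {f : ℤ →₀ ℂ | ∃ i : ℤ, i ≠ 0 ∧ f = Finsupp.single i 1}) := by
  refine ⟨?_, ?_, ?_, ?_⟩
  · intro x v _
    exact (mem_span_iff _).mpr (vab_apply_zero x v)
  · intro h
    have h1 : Finsupp.single (1 : ℤ) (1 : ℂ) ∈
        Submodule.span ℂ {f : ℤ →₀ ℂ | ∃ i : ℤ, i ≠ 0 ∧ f = Finsupp.single i 1} :=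
      (mem_span_iff _).mpr (by simp)
    rw [h, Submodule.mem_bot, Finsupp.single_eq_zero] at h1
    exact one_ne_zero h1
  · intro h
    have h1 : Finsupp.single (0 : ℤ) (1 : ℂ) ∈
        Submodule.span ℂ {f : ℤ →₀ ℂ | ∃ i : ℤ, i ≠ 0 ∧ f = Finsupp.single i 1} := by
      rw [h]; trivial
    rw [mem_span_iff, Finsupp.single_eq_same] at h1
    exact one_ne_zero h1
  · intro U hInv hbot htop
    have hd : ∀ n : ℤ, ∀ f ∈ U, dAct 0 1 n f ∈ U := by
      intro n f hf
      have h := hInv (dGen n) f hf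
      simp only at h
      rwa [vab_dGen] at h
    have hext := extract U (hd 0)
    -- single 0 1 is not in U
    have h0notin : Finsupp.single (0 : ℤ) (1 : ℂ) ∉ U := by
      intro h00
      apply htop
      apply eq_top_of_singles
      intro m
      by_cases hm : m = 0
      · subst hm; exact h00
      · have h1 := hd m _ h00
        rw [dAct_single] at h1
        simp only [Int.cast_zero, zero_add] at h1
        rw [Finsupp.smul_single, smul_eq_mul, mul_one] at h1
        exact single_one_mem U (Int.cast_ne_zero.mpr hm) h1
    -- there is k ≠ 0 with single k 1 ∈ U
    obtain ⟨f, hfU, hf0⟩ := Submodule.ne_bot_iff U |>.mp hbot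
    obtain ⟨k, hk⟩ : ∃ k, f k ≠ 0 := by
      by_contra h
      push_neg at h
      exact hf0 (Finsupp.ext h)
    have hk1 : Finsupp.single k (1 : ℂ) ∈ U := single_one_mem U hk (hext f hfU k)
    have hkne : k ≠ 0 := by
      rintro rfl
      exact h0notin hk1
    apply le_antisymm
    · -- U ≤ span
      intro g hg
      rw [mem_span_iff]
      by_contra hg0
      exact h0notin (single_one_mem U hg0 (hext g hg 0))
    · rw [Submodule.span_le]
      rintro _ ⟨m, hm, rfl⟩
      have h1 := hd (m - k) _ hk1
      rw [dAct_single] at h1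
      have hkm : k + (m - k) = m := by omega
      rw [hkm] at h1
      have hco : ((k : ℂ) + ((m : ℤ) - k : ℤ)) = (m : ℂ) := by push_cast; ring
      rw [hco] at h1
      have hmne : ((m : ℂ)) ≠ 0 := Int.cast_ne_zero.mpr hm
      have h2 := U.smul_mem ((m : ℂ))⁻¹ h1
      rwa [smul_smul, inv_mul_cancel₀ hmne, one_smul] at h2
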